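/- Filon interpolation error bound (Remark 2.4): let h > 0 and let f : ℝ → E be three times continuously differentiable on [0,h], with derivatives f', f'', f'''. Define the quadratic Filon interpolant p(s) := ((f'(h) − f'(0))/(2h)) · s² + f'(0) · s + f(0). Then for every s ∈ [0,h], ‖f(s) − p(s)‖ ≤ (h³/4) · sup_{ξ∈[0,h]} ‖f'''(ξ)‖. -/

import Mathlib

open Set

/-- If `‖g' x‖ ≤ M (x - a)` on `[a,b]`, then `‖g x - g a‖ ≤ M (x-a)^2 / 2`. -/
lemma aux_quad {E : Type*} [NormedAddCommGroup E] [NormedSpace ℝ E]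
    {g g' : ℝ → E} {a b M : ℝ}
    (hg : ∀ x ∈ Set.Icc a b, HasDerivAt g (g' x) x)
    (hbound : ∀ x ∈ Set.Icc a b, ‖g' x‖ ≤ M * (x - a)) :
    ∀ x ∈ Set.Icc a b, ‖g x - g a‖ ≤ M * (x - a) ^ 2 / 2 := by
  intro x hx
  have hcont : ContinuousOn (fun u => g u - g a) (Set.Icc a b) := fun u hu =>
    ((hg u hu).continuousAt.sub continuousAt_const).continuousWithinAt
  have hderiv : ∀ u ∈ Set.Ico a b,
      HasDerivWithinAt (fun u => g u - g a) (g' u) (Set.Ici u) u := fun u hu =>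
    ((hg u (Set.Ico_subset_Icc_self hu)).sub_const _).hasDerivWithinAt
  have hB : ∀ u : ℝ, HasDerivAt (fun u => M * (u - a) ^ 2 / 2) (M * (u - a)) u := by
    intro u
    have : HasDerivAt (fun u => M * (u - a) ^ 2 / 2)
        (M * (2 * (u - a) ^ 1 * 1) / 2) u := by
      exact ((((hasDerivAt_id u).sub_const a).pow 2).const_mul M).div_const 2
    convert this using 1; ring
  have := image_norm_le_of_norm_deriv_right_le_deriv_boundary hcont hderiv
    (by simp) hB (fun u hu => hbound u (Set.Ico_subset_Icc_self hu)) hx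
  simpa using this

/-- If `‖g' x‖ ≤ M (t - x)` on `[0,t]`, then `‖g t - g 0‖ ≤ M t^2 / 2`. -/
lemma aux_quad' {E : Type*} [NormedAddCommGroup E] [NormedSpace ℝ E]
    {g g' : ℝ → E} {t M : ℝ} (ht : 0 ≤ t)
    (hg : ∀ x ∈ Set.Icc (0:ℝ) t, HasDerivAt g (g' x) x)
    (hbound : ∀ x ∈ Set.Icc (0:ℝ) t, ‖g' x‖ ≤ M * (t - x)) :
    ‖g t - g 0‖ ≤ M * t ^ 2 / 2 := by
  have hcont : ContinuousOn (fun u => g u - g 0) (Set.Icc 0 t) := fun u hu =>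
    ((hg u hu).continuousAt.sub continuousAt_const).continuousWithinAt
  have hderiv : ∀ u ∈ Set.Ico (0:ℝ) t,
      HasDerivWithinAt (fun u => g u - g 0) (g' u) (Set.Ici u) u := fun u hu =>
    ((hg u (Set.Ico_subset_Icc_self hu)).sub_const _).hasDerivWithinAt
  have hB : ∀ u : ℝ, HasDerivAt (fun u => M * (t * u - u ^ 2 / 2)) (M * (t - u)) u := by
    intro u
    have : HasDerivAt (fun u => M * (t * u - u ^ 2 / 2))
        (M * (t * 1 - 2 * u ^ 1 * 1 / 2)) u := by
      exact (((hasDerivAt_id u).const_mul t).sub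
        (((hasDerivAt_id u).pow 2).div_const 2)).const_mul M
    convert this using 1; ring
  have := image_norm_le_of_norm_deriv_right_le_deriv_boundary hcont hderiv
    (by simp) hB (fun u hu => hbound u (Set.Ico_subset_Icc_self hu))
    (Set.right_mem_Icc.2 ht)
  calc ‖g t - g 0‖ ≤ M * (t * t - t ^ 2 / 2) := this
    _ = M * t ^ 2 / 2 := by ring

theorem filon_interpolation_error_bound
    {E : Type*} [NormedAddCommGroup E] [NormedSpace ℝ E]
    (h : ℝ) (hh : 0 < h) (f f' f'' f''' : ℝ → E)
    (hd1 : ∀ s ∈ Set.Icc (0 : ℝ) h, HasDerivAt f (f' s) s)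
    (hd2 : ∀ s ∈ Set.Icc (0 : ℝ) h, HasDerivAt f' (f'' s) s)
    (hd3 : ∀ s ∈ Set.Icc (0 : ℝ) h, HasDerivAt f'' (f''' s) s)
    (hcont : ContinuousOn f''' (Set.Icc (0 : ℝ) h)) :
    ∀ s ∈ Set.Icc (0 : ℝ) h,
      ‖f s - ((s ^ 2 / (2 * h)) • (f' h - f' 0) + s • f' 0 + f 0)‖ ≤
        (h ^ 3 / 4) * ⨆ ξ : Set.Icc (0 : ℝ) h, ‖f''' ξ‖ := by
  set M : ℝ := ⨆ ξ : Set.Icc (0 : ℝ) h, ‖f''' ξ‖ with hMdef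
  -- boundedness / sup facts
  have hbdd : BddAbove (Set.range fun ξ : Set.Icc (0:ℝ) h => ‖f''' ξ‖) := by
    have him : BddAbove ((fun x => ‖f''' x‖) '' Set.Icc (0:ℝ) h) :=
      (isCompact_Icc.image_of_continuousOn hcont.norm).bddAbove
    exact him.mono (by rintro x ⟨ξ, rfl⟩; exact ⟨ξ, ξ.2, rfl⟩)
  have hM : ∀ ξ ∈ Set.Icc (0:ℝ) h, ‖f''' ξ‖ ≤ M := fun ξ hξ =>
    le_ciSup hbdd (⟨ξ, hξ⟩ : Set.Icc (0:ℝ) h)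
  have hM0 : 0 ≤ M := le_trans (norm_nonneg _) (hM 0 ⟨le_refl 0, hh.le⟩)
  -- Lipschitz bound on f''
  have hLip : ∀ u ∈ Set.Icc (0:ℝ) h, ∀ t ∈ Set.Icc (0:ℝ) h,
      ‖f'' u - f'' t‖ ≤ M * |u - t| := by
    intro u hu t ht
    have := (convex_Icc (0:ℝ) h).norm_image_sub_le_of_norm_hasDerivWithin_le
      (f := f'') (f' := f''') (C := M)
      (fun x hx => (hd3 x hx).hasDerivWithinAt) hM ht hu
    simpa [Real.norm_eq_abs] using this
  -- Taylor-type bounds at each t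
  have taylorA : ∀ t ∈ Set.Icc (0:ℝ) h,
      ‖f' t - f' 0 - t • f'' t‖ ≤ M * t ^ 2 / 2 := by
    intro t ht
    have key := aux_quad' (g := fun u => f' u - u • f'' t)
      (g' := fun u => f'' u - f'' t) (t := t) (M := M) ht.1
      (fun x hx => (hd2 x ⟨hx.1, hx.2.trans ht.2⟩).sub
        ((hasDerivAt_id x).smul_const (f'' t) |>.congr_deriv (by simp)))
      (fun x hx => by
        have := hLip x ⟨hx.1, hx.2.trans ht.2⟩ t ht
        rwa [abs_of_nonpos (by linarith [hx.2]), neg_sub] at this)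
    have : ‖f' t - t • f'' t - (f' 0 - (0:ℝ) • f'' t)‖ ≤ M * t ^ 2 / 2 := key
    simpa [sub_sub_eq_add_sub, sub_right_comm] using this
  have taylorB : ∀ t ∈ Set.Icc (0:ℝ) h,
      ‖f' h - f' t - (h - t) • f'' t‖ ≤ M * (h - t) ^ 2 / 2 := by
    intro t ht
    have key := aux_quad (g := fun u => f' u - u • f'' t)
      (g' := fun u => f'' u - f'' t) (a := t) (b := h) (M := M)
      (fun x hx => (hd2 x ⟨ht.1.trans hx.1, hx.2⟩).sub
        ((hasDerivAt_id x).smul_const (f'' t) |>.congr_deriv (by simp)))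
      (fun x hx => by
        have := hLip x ⟨ht.1.trans hx.1, hx.2⟩ t ht
        rwa [abs_of_nonneg (by linarith [hx.1])] at this)
      h (Set.right_mem_Icc.2 ht.2)
    have : ‖f' h - h • f'' t - (f' t - t • f'' t)‖ ≤ M * (h - t) ^ 2 / 2 := key
    rw [show f' h - f' t - (h - t) • f'' t
        = f' h - h • f'' t - (f' t - t • f'' t) by
      rw [sub_smul]; abel]
    exact this
  -- derivative of the error function G
  set G : ℝ → E := fun s => f s - ((s ^ 2 / (2 * h)) • (f' h - f' 0) + s • f' 0 + f 0)
    with hGdef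
  set G' : ℝ → E := fun s => f' s - ((s / h) • (f' h - f' 0) + f' 0) with hG'def
  have hGd : ∀ s ∈ Set.Icc (0:ℝ) h, HasDerivAt G (G' s) s := by
    intro s hs
    have h1 : HasDerivAt (fun u : ℝ => (u ^ 2 / (2 * h)) • (f' h - f' 0))
        ((2 * s ^ 1 * 1 / (2 * h)) • (f' h - f' 0)) s :=
      (((hasDerivAt_id s).pow 2).div_const (2 * h)).smul_const _
    have h2 : HasDerivAt (fun u : ℝ => u • f' 0) ((1:ℝ) • f' 0) s :=
      (hasDerivAt_id s).smul_const _
    have h3 := (hd1 s hs).sub ((h1.add h2).add_const (f 0))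
    have he : 2 * s ^ 1 * 1 / (2 * h) = s / h := by
      field_simp
    rw [he, one_smul] at h3
    exact h3
  -- bound on G'
  have hG'bound : ∀ t ∈ Set.Icc (0:ℝ) h, ‖G' t‖ ≤ (M * h / 2) * (t - 0) := by
    intro t ht
    have hid : G' t = (1 - t / h) • (f' t - f' 0 - t • f'' t)
        - (t / h) • (f' h - f' t - (h - t) • f'' t) := by
      rw [hG'def]
      simp only
      have hct : t = (t / h) * h := by field_simp
      set c := t / h with hc
      rw [show t = c * h from hct]
      module
    have hc1 : (0:ℝ) ≤ 1 - t / h := by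
      rw [sub_nonneg]; exact div_le_one_of_le₀ ht.2 hh.le
    have hc2 : (0:ℝ) ≤ t / h := div_nonneg ht.1 hh.le
    calc ‖G' t‖ ≤ ‖(1 - t / h) • (f' t - f' 0 - t • f'' t)‖
          + ‖(t / h) • (f' h - f' t - (h - t) • f'' t)‖ := by
          rw [hid]; exact norm_sub_le _ _
      _ ≤ (1 - t / h) * (M * t ^ 2 / 2) + (t / h) * (M * (h - t) ^ 2 / 2) := by
          gcongr
          · rw [norm_smul, Real.norm_eq_abs, abs_of_nonneg hc1]
            exact mul_le_mul_of_nonneg_left (taylorA t ht) hc1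
          · rw [norm_smul, Real.norm_eq_abs, abs_of_nonneg hc2]
            exact mul_le_mul_of_nonneg_left (taylorB t ht) hc2
      _ = M * t * (h - t) / 2 := by field_simp; ring
      _ ≤ (M * h / 2) * (t - 0) := by nlinarith [mul_nonneg hM0 (sq_nonneg t), ht.1, ht.2, hM0]
  -- integrate the bound on G'
  intro s hs
  have := aux_quad (g := G) (g' := G') (a := 0) (b := h) (M := M * h / 2)
    hGd hG'bound s hs
  have hG0 : G 0 = 0 := by simp [hGdef]
  rw [hG0, sub_zero] at this
  calc ‖G s‖ ≤ M * h / 2 * (s - 0) ^ 2 / 2 := this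
    _ ≤ h ^ 3 / 4 * M := by
        rw [sub_zero]
        nlinarith [mul_nonneg hM0 (mul_nonneg hh.le (mul_nonneg
          (sub_nonneg.2 hs.2) (add_nonneg hh.le hs.1))), hs.1, hs.2, hM0]
    _ = (h ^ 3 / 4) * M := by ring
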